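/- Let F be a field, X = X_1 ⊔ … ⊔ X_q a finite set of variables partitioned into q disjoint blocks, and for each j ∈ [q] let g_j ∈ F[X_j] be a multilinear polynomial. Let (Y, Z) be any partition of X and set Y_j = Y ∩ X_j, Z_j = Z ∩ X_j. Then rank(M_{Y,Z}(∏_{j=1}^q g_j)) = ∏_{j=1}^q rank(M_{Y_j,Z_j}(g_j)). -/

import Mathlib

open MvPolynomial

section Auxiliary

open Matrix Finset LinearMap Kronecker

variable {F : Type*} [Field F] {V : Type*} [Fintype V] [DecidableEq V]

/-- rank of a submatrix along equivs. -/
theorem Matrix.rank_submatrix'' {m n m' n' : Type*} [Fintype m] [Fintype n] [Fintype m'] [Fintype n']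
    (A : Matrix m n F) (e₁ : m' ≃ m) (e₂ : n' ≃ n) :
    (A.submatrix e₁ e₂).rank = A.rank := by
  have h : (A.submatrix e₁ e₂).mulVecLin =
      (LinearEquiv.funCongrLeft F F e₁ : (m → F) →ₗ[F] (m' → F)) ∘ₗ
        A.mulVecLin ∘ₗ (LinearEquiv.funCongrLeft F F e₂.symm : (n' → F) →ₗ[F] (n → F)) := by
    rw [Matrix.mulVecLin_submatrix]
    rfl
  rw [Matrix.rank, Matrix.rank, h, LinearMap.range_comp, LinearMap.range_comp,
    LinearEquiv.range, Submodule.map_top, LinearEquiv.finrank_map_eq]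

theorem LinearMap.finrank_range_tensorProduct_map
    {M N M' N' : Type*} [AddCommGroup M] [AddCommGroup N] [AddCommGroup M'] [AddCommGroup N']
    [Module F M] [Module F N] [Module F M'] [Module F N']
    [FiniteDimensional F M'] [FiniteDimensional F N']
    (f : M →ₗ[F] M') (g : N →ₗ[F] N') :
    Module.finrank F (LinearMap.range (TensorProduct.map f g)) =
      Module.finrank F (LinearMap.range f) * Module.finrank F (LinearMap.range g) := by
  have hdecomp : TensorProduct.map f g =
      (TensorProduct.mapIncl (LinearMap.range f) (LinearMap.range g)).comp
        (TensorProduct.map f.rangeRestrict g.rangeRestrict) := by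
    rw [TensorProduct.mapIncl, ← TensorProduct.map_comp]
    congr 1
  have hsurj : Function.Surjective (TensorProduct.map f.rangeRestrict g.rangeRestrict) :=
    TensorProduct.map_surjective f.surjective_rangeRestrict g.surjective_rangeRestrict
  rw [hdecomp, LinearMap.range_comp_of_range_eq_top _ (LinearMap.range_eq_top.mpr hsurj),
    LinearMap.finrank_range_of_inj (Module.Flat.tensorProduct_mapIncl_injective_of_right _ _),
    Module.finrank_tensorProduct]

theorem Matrix.rank_kronecker {m n p q : Type*} [Fintype m] [Fintype n] [Fintype p] [Fintype q]
    [DecidableEq n] [DecidableEq q] (A : Matrix m n F) (B : Matrix p q F) :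
    (A ⊗ₖ B).rank = A.rank * B.rank := by
  let bm := Pi.basisFun F m
  let bn := Pi.basisFun F n
  let bp := Pi.basisFun F p
  let bq := Pi.basisFun F q
  rw [Matrix.rank_eq_finrank_range_toLin (A ⊗ₖ B) (bm.tensorProduct bp) (bn.tensorProduct bq),
    Matrix.toLin_kronecker, Matrix.rank_eq_finrank_range_toLin A bm bn,
    Matrix.rank_eq_finrank_range_toLin B bp bq,
    LinearMap.finrank_range_tensorProduct_map]

theorem msup_apply (A : Finset V) (v : V) :
    (∑ w ∈ A, Finsupp.single w (1 : ℕ)) v = if v ∈ A then 1 else 0 := by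
  rw [Finset.sum_apply']
  simp [Finsupp.single_apply, Finset.sum_ite_eq A v (fun _ => (1:ℕ))]

theorem msup_support (A : Finset V) :
    (∑ w ∈ A, Finsupp.single w (1 : ℕ)).support = A := by
  ext v
  simp [Finsupp.mem_support_iff, msup_apply]

theorem msup_union {A B : Finset V} (h : Disjoint A B) :
    (∑ w ∈ A ∪ B, Finsupp.single w (1 : ℕ)) =
      (∑ w ∈ A, Finsupp.single w (1 : ℕ)) + ∑ w ∈ B, Finsupp.single w (1 : ℕ) :=
  Finset.sum_union h

theorem msup_eq_zero_iff (A : Finset V) :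
    (∑ w ∈ A, Finsupp.single w (1 : ℕ)) = 0 ↔ A = ∅ := by
  rw [← Finsupp.support_eq_empty, msup_support]

theorem coeff_eq_zero_of_not_subset_vars (p : MvPolynomial V F) {m : V →₀ ℕ}
    (h : ¬ (m.support : Set V) ⊆ (p.vars : Set V)) : coeff m p = 0 := by
  by_contra hc
  exact h fun v hv => (mem_vars v).2 ⟨m, mem_support_iff.2 hc, hv⟩

theorem coeff_mul_disjoint (f h : MvPolynomial V F) {S T : Finset V}
    (hfS : f.vars ⊆ S) (hhT : h.vars ⊆ T) (hST : Disjoint S T)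
    (a b : V →₀ ℕ) (ha : a.support ⊆ S) (hb : b.support ⊆ T) :
    coeff (a + b) (f * h) = coeff a f * coeff b h := by
  rw [coeff_mul]
  apply Finset.sum_eq_single (a, b)
  · rintro ⟨x, y⟩ hxy hne
    by_contra hc
    have hx : coeff x f ≠ 0 := fun h0 => hc (by simp [h0])
    have hy : coeff y h ≠ 0 := fun h0 => hc (by simp [h0])
    have hxS : x.support ⊆ S := fun v hv => hfS ((mem_vars v).2 ⟨x, mem_support_iff.2 hx, hv⟩)
    have hyT : y.support ⊆ T := fun v hv => hhT ((mem_vars v).2 ⟨y, mem_support_iff.2 hy, hv⟩)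
    have hsum : x + y = a + b := Finset.HasAntidiagonal.mem_antidiagonal.1 hxy
    have hxa : x = a := by
      ext v
      have hv := DFunLike.congr_fun hsum v
      simp only [Finsupp.add_apply] at hv
      by_cases hvS : v ∈ S
      · have hvT : v ∉ T := fun hvT => (Finset.disjoint_left.1 hST) hvS hvT
        have hy0 : y v = 0 := Finsupp.notMem_support_iff.1 fun hm => hvT (hyT hm)
        have hb0 : b v = 0 := Finsupp.notMem_support_iff.1 fun hm => hvT (hb hm)
        omega
      · have hx0 : x v = 0 := Finsupp.notMem_support_iff.1 fun hm => hvS (hxS hm)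
        have ha0 : a v = 0 := Finsupp.notMem_support_iff.1 fun hm => hvS (ha hm)
        omega
    have hyb : y = b := by
      have h2 := hsum
      rw [hxa] at h2
      exact add_left_cancel h2
    exact hne (by rw [hxa, hyb])
  · intro hmem
    refine absurd (Finset.HasAntidiagonal.mem_antidiagonal.2 ?_) hmem
    rfl

/-- The 0/1 "identity-inclusion" matrix between two subset index types. -/
noncomputable def inclM (Y₁ Y₂ : Finset V) :
    Matrix {A : Finset V // A ⊆ Y₁} {A : Finset V // A ⊆ Y₂} F :=
  fun A B => if A.1 = B.1 then 1 else 0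

theorem inclM_mul {Y₁ Y₂ : Finset V} (h : Y₁ ⊆ Y₂) {C : Type*} [Fintype C]
    (M : Matrix {A : Finset V // A ⊆ Y₂} C F) :
    (inclM (F := F) Y₁ Y₂) * M = Matrix.of fun A c => M ⟨A.1, A.2.trans h⟩ c := by
  ext A c
  rw [Matrix.mul_apply]
  rw [Fintype.sum_eq_single (⟨A.1, A.2.trans h⟩ : {A : Finset V // A ⊆ Y₂})]
  · simp [inclM]
  · intro B hB
    have : ¬ (A.1 = B.1) := fun he => hB (by ext : 1; exact he.symm)
    simp [inclM, this]

theorem mul_inclM {Y₁ Y₂ : Finset V} (h : Y₁ ⊆ Y₂) {C : Type*} [Fintype C]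
    (M : Matrix C {A : Finset V // A ⊆ Y₂} F) :
    M * (inclM (F := F) Y₂ Y₁) = Matrix.of fun c B => M c ⟨B.1, B.2.trans h⟩ := by
  ext c B
  rw [Matrix.mul_apply]
  rw [Fintype.sum_eq_single (⟨B.1, B.2.trans h⟩ : {A : Finset V // A ⊆ Y₂})]
  · simp [inclM]
  · intro A hA
    have : ¬ (A.1 = B.1) := fun he => hA (by ext : 1; exact he)
    simp [inclM, this]

theorem inclM_mul' {Y₁ Y₂ : Finset V} {C : Type*} [Fintype C]
    (M : Matrix {A : Finset V // A ⊆ Y₁} C F) :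
    (inclM (F := F) Y₂ Y₁) * M =
      Matrix.of fun A c => if hA : A.1 ⊆ Y₁ then M ⟨A.1, hA⟩ c else 0 := by
  ext A c
  rw [Matrix.mul_apply]
  by_cases hA : A.1 ⊆ Y₁
  · rw [Fintype.sum_eq_single (⟨A.1, hA⟩ : {A : Finset V // A ⊆ Y₁})]
    · simp [inclM, hA]
    · intro B hB
      have : ¬ (A.1 = B.1) := fun he => hB (by ext : 1; exact he.symm)
      simp [inclM, this]
  · rw [Finset.sum_eq_zero, Matrix.of_apply, dif_neg hA]
    intro B _
    have : ¬ (A.1 = B.1) := fun he => hA (he ▸ B.2)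
    simp [inclM, this]

theorem mul_inclM' {Y₁ Y₂ : Finset V} {C : Type*} [Fintype C]
    (M : Matrix C {A : Finset V // A ⊆ Y₁} F) :
    M * (inclM (F := F) Y₁ Y₂) =
      Matrix.of fun c B => if hB : B.1 ⊆ Y₁ then M c ⟨B.1, hB⟩ else 0 := by
  ext c B
  rw [Matrix.mul_apply]
  by_cases hB : B.1 ⊆ Y₁
  · rw [Fintype.sum_eq_single (⟨B.1, hB⟩ : {A : Finset V // A ⊆ Y₁})]
    · simp [inclM, hB]
    · intro A hA
      have : ¬ (A.1 = B.1) := fun he => hA (by ext : 1; exact he)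
      simp [inclM, this]
  · rw [Finset.sum_eq_zero, Matrix.of_apply, dif_neg hB]
    intro A _
    have : ¬ (A.1 = B.1) := fun he => hB (he ▸ A.2)
    simp [inclM, this]

end Auxiliary

/-- The partial derivative matrix `M_{Y,Z}(f)` of a multilinear polynomial `f` with
respect to a partition `(Y, Z)` of the variables: rows are indexed by subsets `A ⊆ Y`,
columns by subsets `B ⊆ Z`, and the `(A, B)` entry is the coefficient in `f` of the
monomial `∏_{y ∈ A} y · ∏_{z ∈ B} z`. -/
noncomputable def pdMatrix {F : Type*} [Field F] {V : Type*} [Fintype V] [DecidableEq V]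
    (f : MvPolynomial V F) (Y Z : Finset V) :
    Matrix {A : Finset V // A ⊆ Y} {B : Finset V // B ⊆ Z} F :=
  fun A B => f.coeff ((∑ v ∈ A.1, Finsupp.single v 1) + ∑ v ∈ B.1, Finsupp.single v 1)

section Main

open Matrix Finset LinearMap Kronecker

variable {F : Type*} [Field F] {V : Type*} [Fintype V] [DecidableEq V]

theorem rank_pdMatrix_inter (p : MvPolynomial V F) {W : Finset V} (hp : p.vars ⊆ W)
    (Y Z : Finset V) (hYZ : Disjoint Y Z) :
    (pdMatrix p Y Z).rank = (pdMatrix p (Y ∩ W) (Z ∩ W)).rank := by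
  apply le_antisymm
  · have key : pdMatrix p Y Z =
        (inclM (F := F) Y (Y ∩ W)) * ((pdMatrix p (Y ∩ W) (Z ∩ W)) * (inclM (F := F) (Z ∩ W) Z)) := by
      rw [mul_inclM', inclM_mul']
      ext A B
      by_cases hA : A.1 ⊆ Y ∩ W
      · by_cases hB : B.1 ⊆ Z ∩ W
        · simp only [Matrix.of_apply, dif_pos hA, dif_pos hB]
          rfl
        · simp only [Matrix.of_apply, dif_pos hA, dif_neg hB]
          apply coeff_eq_zero_of_not_subset_vars
          intro hsub
          apply hB
          intro v hv
          have hds : Disjoint A.1 B.1 := hYZ.mono A.2 B.2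
          have hmem : v ∈ ((∑ v ∈ A.1, Finsupp.single v (1:ℕ)) +
              ∑ v ∈ B.1, Finsupp.single v 1).support := by
            rw [← msup_union hds, msup_support]
            exact Finset.mem_union_right _ hv
          exact Finset.mem_inter.2 ⟨B.2 hv, hp (hsub hmem)⟩
      · simp only [Matrix.of_apply, dif_neg hA]
        apply coeff_eq_zero_of_not_subset_vars
        intro hsub
        apply hA
        intro v hv
        have hds : Disjoint A.1 B.1 := hYZ.mono A.2 B.2
        have hmem : v ∈ ((∑ v ∈ A.1, Finsupp.single v (1:ℕ)) +
            ∑ v ∈ B.1, Finsupp.single v 1).support := by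
          rw [← msup_union hds, msup_support]
          exact Finset.mem_union_left _ hv
        exact Finset.mem_inter.2 ⟨A.2 hv, hp (hsub hmem)⟩
    rw [key]
    exact le_trans (Matrix.rank_mul_le_right _ _) (Matrix.rank_mul_le_left _ _)
  · have key : pdMatrix p (Y ∩ W) (Z ∩ W) =
        (inclM (F := F) (Y ∩ W) Y) * ((pdMatrix p Y Z) * (inclM (F := F) Z (Z ∩ W))) := by
      rw [mul_inclM Finset.inter_subset_left, inclM_mul Finset.inter_subset_left]
      rfl
    rw [key]
    exact le_trans (Matrix.rank_mul_le_right _ _) (Matrix.rank_mul_le_left _ _)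

/-- Splitting subsets of `Y ∩ (S ∪ T)` into their `S`- and `T`-parts. -/
def splitEquiv (Y S T : Finset V) (hST : Disjoint S T) :
    {A : Finset V // A ⊆ Y ∩ (S ∪ T)} ≃
      {A : Finset V // A ⊆ Y ∩ S} × {A : Finset V // A ⊆ Y ∩ T} where
  toFun A := (⟨A.1 ∩ S, fun v hv => Finset.mem_inter.2
      ⟨(Finset.mem_inter.1 (A.2 (Finset.mem_inter.1 hv).1)).1, (Finset.mem_inter.1 hv).2⟩⟩,
    ⟨A.1 ∩ T, fun v hv => Finset.mem_inter.2
      ⟨(Finset.mem_inter.1 (A.2 (Finset.mem_inter.1 hv).1)).1, (Finset.mem_inter.1 hv).2⟩⟩)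
  invFun p := ⟨p.1.1 ∪ p.2.1, Finset.union_subset
      (p.1.2.trans (Finset.inter_subset_inter le_rfl Finset.subset_union_left))
      (p.2.2.trans (Finset.inter_subset_inter le_rfl Finset.subset_union_right))⟩
  left_inv A := by
    ext : 1
    simp only
    rw [← Finset.inter_union_distrib_left]
    exact Finset.inter_eq_left.2 fun v hv => (Finset.mem_inter.1 (A.2 hv)).2
  right_inv p := by
    have h1 : p.1.1 ⊆ S := p.1.2.trans Finset.inter_subset_right
    have h2 : p.2.1 ⊆ T := p.2.2.trans Finset.inter_subset_right
    ext : 2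
    · simp only
      rw [Finset.union_inter_distrib_right, Finset.inter_eq_left.2 h1,
        Finset.disjoint_iff_inter_eq_empty.1 (hST.symm.mono h2 le_rfl), Finset.union_empty]
    · simp only
      rw [Finset.union_inter_distrib_right, Finset.inter_eq_left.2 h2,
        Finset.disjoint_iff_inter_eq_empty.1 (hST.mono h1 le_rfl), Finset.empty_union]

theorem pdMatrix_mul_eq (f h : MvPolynomial V F) {S T : Finset V}
    (hfS : f.vars ⊆ S) (hhT : h.vars ⊆ T) (hST : Disjoint S T) (Y Z : Finset V)
    (hYZ : Disjoint Y Z) :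
    pdMatrix (f * h) (Y ∩ (S ∪ T)) (Z ∩ (S ∪ T)) =
      ((pdMatrix f (Y ∩ S) (Z ∩ S)) ⊗ₖ (pdMatrix h (Y ∩ T) (Z ∩ T))).submatrix
        (splitEquiv Y S T hST) (splitEquiv Z S T hST) := by
  ext A B
  have hA : A.1 ⊆ S ∪ T := fun v hv => (Finset.mem_inter.1 (A.2 hv)).2
  have hB : B.1 ⊆ S ∪ T := fun v hv => (Finset.mem_inter.1 (B.2 hv)).2
  have hdA : (∑ v ∈ A.1, Finsupp.single v (1:ℕ)) =
      (∑ v ∈ A.1 ∩ S, Finsupp.single v 1) + ∑ v ∈ A.1 ∩ T, Finsupp.single v 1 := by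
    rw [← msup_union (hST.mono Finset.inter_subset_right Finset.inter_subset_right),
      ← Finset.inter_union_distrib_left, Finset.inter_eq_left.2 hA]
  have hdB : (∑ v ∈ B.1, Finsupp.single v (1:ℕ)) =
      (∑ v ∈ B.1 ∩ S, Finsupp.single v 1) + ∑ v ∈ B.1 ∩ T, Finsupp.single v 1 := by
    rw [← msup_union (hST.mono Finset.inter_subset_right Finset.inter_subset_right),
      ← Finset.inter_union_distrib_left, Finset.inter_eq_left.2 hB]
  have key : ((∑ v ∈ A.1, Finsupp.single v (1:ℕ)) + ∑ v ∈ B.1, Finsupp.single v 1) =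
      ((∑ v ∈ A.1 ∩ S, Finsupp.single v 1) + ∑ v ∈ B.1 ∩ S, Finsupp.single v 1) +
      ((∑ v ∈ A.1 ∩ T, Finsupp.single v 1) + ∑ v ∈ B.1 ∩ T, Finsupp.single v 1) := by
    rw [hdA, hdB]; abel
  show coeff _ (f * h) = _
  rw [key, coeff_mul_disjoint f h hfS hhT hST]
  · rfl
  · refine (Finsupp.support_add).trans ?_
    rw [msup_support, msup_support]
    exact Finset.union_subset Finset.inter_subset_right Finset.inter_subset_right
  · refine (Finsupp.support_add).trans ?_
    rw [msup_support, msup_support]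
    exact Finset.union_subset Finset.inter_subset_right Finset.inter_subset_right

theorem rank_pdMatrix_mul (f h : MvPolynomial V F) {S T : Finset V}
    (hfS : f.vars ⊆ S) (hhT : h.vars ⊆ T) (hST : Disjoint S T) (Y Z : Finset V)
    (hYZ : Disjoint Y Z) :
    (pdMatrix (f * h) Y Z).rank =
      (pdMatrix f (Y ∩ S) (Z ∩ S)).rank * (pdMatrix h (Y ∩ T) (Z ∩ T)).rank := by
  have hvars : (f * h).vars ⊆ S ∪ T :=
    (vars_mul f h).trans (Finset.union_subset_union hfS hhT)
  rw [rank_pdMatrix_inter (f * h) hvars Y Z hYZ, pdMatrix_mul_eq f h hfS hhT hST Y Z hYZ,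
    Matrix.rank_submatrix'', Matrix.rank_kronecker]

theorem rank_pdMatrix_one (Y Z : Finset V) :
    (pdMatrix (1 : MvPolynomial V F) Y Z).rank = 1 := by
  have hentry : ∀ (A : {A : Finset V // A ⊆ Y}) (B : {B : Finset V // B ⊆ Z}),
      pdMatrix (1 : MvPolynomial V F) Y Z A B =
        (if A.1 = ∅ then (1:F) else 0) * (if B.1 = ∅ then (1:F) else 0) := by
    intro A B
    show coeff _ (1 : MvPolynomial V F) = _
    rw [coeff_one]
    by_cases hA : A.1 = ∅ <;> by_cases hB : B.1 = ∅
    · simp [hA, hB]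
    · rw [if_neg, if_pos hA, if_neg hB, one_mul]
      intro h0
      exact hB ((msup_eq_zero_iff B.1).1 (by
        have := (add_eq_zero_iff_of_nonneg (by positivity) (by positivity)).1 h0.symm
        exact this.2))
    · rw [if_neg, if_neg hA, zero_mul]
      intro h0
      exact hA ((msup_eq_zero_iff A.1).1 (by
        have := (add_eq_zero_iff_of_nonneg (by positivity) (by positivity)).1 h0.symm
        exact this.1))
    · rw [if_neg, if_neg hA, zero_mul]
      intro h0
      exact hA ((msup_eq_zero_iff A.1).1 (by
        have := (add_eq_zero_iff_of_nonneg (by positivity) (by positivity)).1 h0.symm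
        exact this.1))
  apply le_antisymm
  · have hfact : pdMatrix (1 : MvPolynomial V F) Y Z =
        (Matrix.of fun (A : {A : Finset V // A ⊆ Y}) (_ : Unit) =>
          if A.1 = ∅ then (1:F) else 0) *
        (Matrix.of fun (_ : Unit) (B : {B : Finset V // B ⊆ Z}) =>
          if B.1 = ∅ then (1:F) else 0) := by
      ext A B
      rw [Matrix.mul_apply, hentry A B]
      simp
    rw [hfact]
    exact le_trans (Matrix.rank_mul_le_left _ _)
      (le_trans (Matrix.rank_le_card_width _) (by simp))
  · set e0Y : {A : Finset V // A ⊆ Y} := ⟨∅, Finset.empty_subset Y⟩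
    set e0Z : {B : Finset V // B ⊆ Z} := ⟨∅, Finset.empty_subset Z⟩
    have hval : (pdMatrix (1 : MvPolynomial V F) Y Z).mulVec (Pi.single e0Z 1) e0Y = 1 := by
      rw [Matrix.mulVec, dotProduct, Fintype.sum_eq_single e0Z]
      · rw [hentry e0Y e0Z]
        simp [e0Y, e0Z]
      · intro B hB
        rw [Pi.single_eq_of_ne hB, mul_zero]
    have hvec : (pdMatrix (1 : MvPolynomial V F) Y Z).mulVecLin (Pi.single e0Z 1) ≠ 0 := by
      intro h0
      have := congrFun h0 e0Y
      rw [Matrix.mulVecLin_apply, hval] at this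
      exact one_ne_zero this
    rw [Matrix.rank, Nat.one_le_iff_ne_zero]
    intro h0
    have hbot := Submodule.finrank_eq_zero.1 h0
    exact hvec (by
      have : (pdMatrix (1 : MvPolynomial V F) Y Z).mulVecLin (Pi.single e0Z 1) ∈
          LinearMap.range (pdMatrix (1 : MvPolynomial V F) Y Z).mulVecLin :=
        LinearMap.mem_range_self _ _
      rw [hbot] at this
      simpa using this)

theorem rank_pdMatrix_prod (q : ℕ) (g : Fin q → MvPolynomial V F) (S : Fin q → Finset V)
    (hdisj : ∀ j j', j ≠ j' → Disjoint (S j) (S j'))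
    (hv : ∀ j, (g j).vars ⊆ S j) (Y Z : Finset V) (hYZ : Disjoint Y Z) :
    (pdMatrix (∏ j, g j) Y Z).rank =
      ∏ j, (pdMatrix (g j) (Y ∩ S j) (Z ∩ S j)).rank := by
  induction q generalizing Y Z with
  | zero =>
    rw [Fin.prod_univ_zero, Fin.prod_univ_zero, rank_pdMatrix_one]
  | succ n ih =>
    set T := Finset.univ.biUnion (fun i : Fin n => S i.succ) with hTdef
    have hT : (∏ i : Fin n, g i.succ).vars ⊆ T :=
      (vars_prod _).trans (Finset.biUnion_subset.2 fun i _ =>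
        (hv i.succ).trans (Finset.subset_biUnion_of_mem (fun i : Fin n => S i.succ) (Finset.mem_univ i)))
    have hST : Disjoint (S 0) T :=
      (Finset.disjoint_biUnion_right (S 0) Finset.univ (fun i : Fin n => S i.succ)).2
        fun i _ => hdisj 0 i.succ (Fin.succ_ne_zero i).symm
    rw [Fin.prod_univ_succ, rank_pdMatrix_mul (g 0) (∏ i : Fin n, g i.succ)
      (hv 0) hT hST Y Z hYZ,
      ih (fun i => g i.succ) (fun i => S i.succ)
        (fun i i' hne => hdisj i.succ i'.succ (fun he => hne (Fin.succ_injective n he)))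
        (fun i => hv i.succ) (Y ∩ T) (Z ∩ T)
        (hYZ.mono Finset.inter_subset_left Finset.inter_subset_left),
      Fin.prod_univ_succ]
    congr 1
    refine Finset.prod_congr rfl fun i _ => ?_
    have hsub : S i.succ ⊆ T := Finset.subset_biUnion_of_mem (fun i : Fin n => S i.succ) (Finset.mem_univ i)
    rw [Finset.inter_assoc, Finset.inter_assoc,
      Finset.inter_eq_right.2 hsub]

end Main

/-- If the variables are partitioned into blocks `X_1 ⊔ ⋯ ⊔ X_q` and each `g_j` is a
multilinear polynomial in the variables of `X_j`, then for any partition `(Y, Z)` of the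
variables, `rank M_{Y,Z}(∏_j g_j) = ∏_j rank M_{Y ∩ X_j, Z ∩ X_j}(g_j)`. -/
theorem rank_pdMatrix_prod_eq_prod_rank
    {F : Type*} [Field F] {V : Type*} [Fintype V] [DecidableEq V] (q : ℕ)
    (Xb : Fin q → Finset V)
    (hXdisj : ∀ j j', j ≠ j' → Disjoint (Xb j) (Xb j'))
    (hXcover : Finset.univ.biUnion Xb = (Finset.univ : Finset V))
    (g : Fin q → MvPolynomial V F)
    (hml : ∀ j v, (g j).degreeOf v ≤ 1)
    (hvars : ∀ j, (g j).vars ⊆ Xb j)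
    (Y Z : Finset V) (hYZdisj : Disjoint Y Z) (hYZcover : Y ∪ Z = Finset.univ) :
    (pdMatrix (∏ j, g j) Y Z).rank =
      ∏ j, (pdMatrix (g j) (Y ∩ Xb j) (Z ∩ Xb j)).rank :=
  rank_pdMatrix_prod q g Xb hXdisj hvars Y Z hYZdisj
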